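/- arXiv:2309.06926 — 8 statements merged into one kernel-verified Lean document; each statement's English description precedes it below -/
import Mathlib

section
/- Let U ⊆ ℕ be the range of a strictly increasing sequence of natural numbers with strictly increasing differences of consecutive elements (i.e., U = {u_k : k ∈ ℕ} with 0 < u_{k+1} - u_k < u_{k+2} - u_{k+1} for all k). If Δ ⊆ ℕ is an interval on which U is periodic with period ω > 0, and |Δ| ≥ 2ω, then |Δ ∩ U| ≤ 2. -/
/-- `S` is periodic on the interval `Δ` with period `ω`. -/
def PeriodicOn (S Δ : Set ℕ) (ω : ℕ) : Prop :=
  ∀ x, x ∈ Δ → x + ω ∈ Δ → (x ∈ S ↔ x + ω ∈ S)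

theorem stmt_0 (u : ℕ → ℕ)
    (hmono : ∀ k, u k < u (k + 1))
    (hdiff : ∀ k, u (k + 1) - u k < u (k + 2) - u (k + 1))
    (a b ω : ℕ) (hω : 0 < ω)
    (hper : PeriodicOn (Set.range u) (Set.Icc a b) ω)
    (hlen : 2 * ω ≤ b + 1 - a) :
    (Set.Icc a b ∩ Set.range u).ncard ≤ 2 := by
  classical
  have humono : StrictMono u := strictMono_nat_of_lt_succ hmono
  set T : Set ℕ := Set.Icc a b ∩ Set.range u with hTdef
  by_cases hne : T.Nonempty
  swap
  · rw [Set.not_nonempty_iff_eq_empty] at hne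
    rw [hne]
    simp
  have key : a + 2 * ω ≤ b + 1 := by omega
  have hmemT : ∀ t, t ∈ T ↔ (a ≤ t ∧ t ≤ b ∧ t ∈ Set.range u) := by
    intro t
    simp [hTdef, Set.mem_Icc, and_assoc]
  have hdown : ∀ t ∈ T, a + ω ≤ t → t - ω ∈ T := by
    intro t ht hat
    rw [hmemT] at ht ⊢
    obtain ⟨h1, h2, h3⟩ := ht
    refine ⟨by omega, by omega, ?_⟩
    have hp := hper (t - ω) (Set.mem_Icc.2 ⟨by omega, by omega⟩)
      (by rw [Set.mem_Icc]; omega)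
    rw [hp]
    have he : t - ω + ω = t := by omega
    rw [he]; exact h3
  have hup : ∀ t ∈ T, t < a + ω → t + ω ∈ T := by
    intro t ht hat
    rw [hmemT] at ht ⊢
    obtain ⟨h1, h2, h3⟩ := ht
    refine ⟨by omega, by omega, ?_⟩
    exact (hper t (Set.mem_Icc.2 ⟨h1, h2⟩) (Set.mem_Icc.2 ⟨by omega, by omega⟩)).1 h3
  have hgapinj : ∀ k l, u (k + 1) - u k = u (l + 1) - u l → k = l := by
    have hg : StrictMono (fun k => u (k + 1) - u k) := strictMono_nat_of_lt_succ hdiff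
    exact fun k l h => hg.injective h
  have hconsec : ∀ x y k l, u k = x → u l = y → x < y →
      (∀ i, ¬ (x < u i ∧ u i < y)) → l = k + 1 := by
    intro x y k l hk hl hxy hno
    have hkl : k < l := humono.lt_iff_lt.1 (by rw [hk, hl]; exact hxy)
    by_contra h
    have hlt : k + 1 < l := by omega
    exact hno (k + 1) ⟨by rw [← hk]; exact humono (Nat.lt_succ_self k),
      by rw [← hl]; exact humono hlt⟩
  set v := sInf T with hv
  have hvT : v ∈ T := Nat.sInf_mem hne
  have hvmin : ∀ t ∈ T, v ≤ t := fun t ht => Nat.sInf_le ht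
  have hvb := (hmemT v).1 hvT
  have hvlt : v < a + ω := by
    by_contra h
    push_neg at h
    have h1 := hdown v hvT h
    have h2 := hvmin _ h1
    omega
  have hvω : v + ω ∈ T := hup v hvT hvlt
  have hvωb := (hmemT (v + ω)).1 hvω
  have hsub : T ⊆ {v, v + ω} := by
    by_contra hsub
    rw [Set.not_subset] at hsub
    obtain ⟨t0, ht0, ht0'⟩ := hsub
    simp only [Set.mem_insert_iff, Set.mem_singleton_iff, not_or] at ht0'
    obtain ⟨ht1, ht2⟩ := ht0'
    have hWne : {t | t ∈ T ∧ v < t}.Nonempty :=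
      ⟨t0, ht0, lt_of_le_of_ne (hvmin _ ht0) (Ne.symm ht1)⟩
    set w := sInf {t | t ∈ T ∧ v < t} with hw
    have hwmem := Nat.sInf_mem hWne
    obtain ⟨hwT, hvw⟩ := hwmem
    have hwmin : ∀ t ∈ T, v < t → w ≤ t := fun t ht h => Nat.sInf_le ⟨ht, h⟩
    have hwb := (hmemT w).1 hwT
    have hwv : w = v + ω := by
      have hle : w ≤ v + ω := hwmin _ hvω (by omega)
      by_contra hne'
      have hwlt : w < v + ω := lt_of_le_of_ne hle hne'
      have hwa : w < a + ω := by
        by_contra h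
        push_neg at h
        have h1 := hdown w hwT h
        have h2 := hvmin _ h1
        omega
      have hwωT : w + ω ∈ T := hup w hwT hwa
      have hwωb := (hmemT (w + ω)).1 hwωT
      obtain ⟨k, hk⟩ := hvb.2.2
      obtain ⟨k', hk'⟩ := hwb.2.2
      obtain ⟨l, hl⟩ := hvωb.2.2
      obtain ⟨l', hl'⟩ := hwωb.2.2
      have hk'' : k' = k + 1 := by
        refine hconsec v w k k' hk hk' hvw ?_
        intro i ⟨hi1, hi2⟩
        have hiT : u i ∈ T := (hmemT _).2 ⟨by omega, by omega, ⟨i, rfl⟩⟩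
        have := hwmin _ hiT hi1
        omega
      have hl'' : l' = l + 1 := by
        refine hconsec (v + ω) (w + ω) l l' hl hl' (by omega) ?_
        intro i ⟨hi1, hi2⟩
        have hiT : u i ∈ T := (hmemT _).2 ⟨by omega, by omega, ⟨i, rfl⟩⟩
        have hiA : a + ω ≤ u i := by omega
        have h1 := hdown _ hiT hiA
        have h2 := hwmin _ h1 (by omega)
        omega
      have hgap : u (k + 1) - u k = u (l + 1) - u l := by
        rw [← hk'', ← hl'', hk, hk', hl, hl']
        omega
      have := hgapinj _ _ hgap
      subst this
      rw [hk] at hl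
      omega
    -- now w = v + ω; consider elements above v + ω
    have ht0' : v + ω < t0 := by
      have h1 : v < t0 := lt_of_le_of_ne (hvmin _ ht0) (Ne.symm ht1)
      have h2 := hwmin _ ht0 h1
      omega
    have hZne : {t | t ∈ T ∧ v + ω < t}.Nonempty := ⟨t0, ht0, ht0'⟩
    set z := sInf {t | t ∈ T ∧ v + ω < t} with hz
    have hzmem := Nat.sInf_mem hZne
    obtain ⟨hzT, hvz⟩ := hzmem
    have hzmin : ∀ t ∈ T, v + ω < t → z ≤ t := fun t ht h => Nat.sInf_le ⟨ht, h⟩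
    have hzb := (hmemT z).1 hzT
    have hzval : z = v + 2 * ω := by
      have h1 := hdown z hzT (by omega)
      have h2 := hvmin _ h1
      have h3 := hwmin _ h1 (by omega)
      have h4 : ¬ (v + ω < z - ω) := by
        intro h
        have := hzmin _ h1 h
        omega
      omega
    obtain ⟨p, hp⟩ := hvb.2.2
    obtain ⟨q, hq⟩ := hvωb.2.2
    obtain ⟨r, hr⟩ := hzb.2.2
    have hq' : q = p + 1 := by
      refine hconsec v (v + ω) p q hp hq (by omega) ?_
      intro i ⟨hi1, hi2⟩
      have hiT : u i ∈ T := (hmemT _).2 ⟨by omega, by omega, ⟨i, rfl⟩⟩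
      have := hwmin _ hiT hi1
      omega
    have hr' : r = q + 1 := by
      refine hconsec (v + ω) z q r hq hr (by omega) ?_
      intro i ⟨hi1, hi2⟩
      have hiT : u i ∈ T := (hmemT _).2 ⟨by omega, by omega, ⟨i, rfl⟩⟩
      have := hzmin _ hiT hi1
      omega
    have hgap : u (p + 1) - u p = u (q + 1) - u q := by
      rw [← hq', ← hr', hp, hq, hr]
      omega
    have := hgapinj _ _ hgap
    subst this
    rw [hp] at hq
    omega
  calc T.ncard ≤ ({v, v + ω} : Set ℕ).ncard := Set.ncard_le_ncard hsub (Set.toFinite _)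
    _ ≤ 1 + 1 := le_trans (Set.ncard_insert_le _ _) (by simp [Set.ncard_singleton])
    _ = 2 := rfl
end

section
/- Let S, S' ⊆ ℕ be infinite sets whose symmetric difference S △ S' is finite. Then S is loose if and only if S' is loose. -/
/-- `δ_S(m) ≥ t`: there is no element of `S` strictly between `m` and `m + t`. -/
def GapGE (S : Set ℕ) (m t : ℕ) : Prop := ∀ j, m < j → j < m + t → j ∉ S

/-- `γ_S(n,t)`: the number of `m ∈ S` with `δ_S(m) ≥ t` and `m + t < n`. -/
noncomputable def gamma (S : Set ℕ) (n t : ℕ) : ℕ :=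
  {m | m ∈ S ∧ GapGE S m t ∧ m + t < n}.ncard

/-- `S` is `ε`-loose relative to `n`. -/
def EpsLoose (ε : ℝ) (S : Set ℕ) (n : ℕ) : Prop :=
  ∃ t : ℕ, 1 ≤ t ∧ ε * (n : ℝ) ≤ (t : ℝ) * (gamma S n t : ℝ) ∧
    (n : ℝ) ^ ε ≤ (t : ℝ) ∧ (t : ℝ) ≤ (n : ℝ) ^ (1 - ε)

/-- `S` is loose. -/
def Loose (S : Set ℕ) : Prop :=
  ∃ ε > (0 : ℝ), ∀ᶠ n : ℕ in Filter.atTop, EpsLoose ε S n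

lemma gamma_le_aux {S S' : Set ℕ} {M : ℕ} (h : ∀ k, M ≤ k → (k ∈ S ↔ k ∈ S')) (n t : ℕ) :
    gamma S n t ≤ gamma S' n t + M := by
  set A' : Set ℕ := {m | m ∈ S' ∧ GapGE S' m t ∧ m + t < n} with hA'
  have hA'fin : A'.Finite := by
    apply (Set.finite_Iio n).subset
    intro m hm
    exact lt_of_le_of_lt (Nat.le_add_right m t) hm.2.2
  have hsub : {m | m ∈ S ∧ GapGE S m t ∧ m + t < n} ⊆ A' ∪ Set.Iio M := by
    intro m hm
    by_cases hM : m < M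
    · exact Or.inr hM
    · push_neg at hM
      obtain ⟨h1, h2, h3⟩ := hm
      refine Or.inl ⟨(h m hM).mp h1, ?_, h3⟩
      intro j hj1 hj2 hjS'
      exact h2 j hj1 hj2 ((h j (le_of_lt (lt_of_le_of_lt hM hj1))).mpr hjS')
  have hIio : (Set.Iio M).ncard = M := by
    have : Set.Iio M = ↑(Finset.range M) := by ext x; simp
    rw [this, Set.ncard_coe_finset, Finset.card_range]
  calc gamma S n t ≤ (A' ∪ Set.Iio M).ncard :=
        Set.ncard_le_ncard hsub (hA'fin.union (Set.finite_Iio M))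
    _ ≤ A'.ncard + (Set.Iio M).ncard := Set.ncard_union_le _ _
    _ = gamma S' n t + M := by rw [hIio]; rfl

lemma loose_of {S S' : Set ℕ} {M : ℕ} (h : ∀ k, M ≤ k → (k ∈ S ↔ k ∈ S')) :
    Loose S → Loose S' := by
  rintro ⟨ε, hε, hev⟩
  refine ⟨ε / 2, by positivity, ?_⟩
  have htend : Filter.Tendsto (fun n : ℕ => (ε / 2) * (n : ℝ) ^ ε) Filter.atTop Filter.atTop := by
    apply Filter.Tendsto.const_mul_atTop (by positivity)
    exact (tendsto_rpow_atTop hε).comp tendsto_natCast_atTop_atTop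
  filter_upwards [hev, htend.eventually_ge_atTop (M : ℝ), Filter.eventually_ge_atTop 1]
    with n hn hM hn1
  obtain ⟨t, ht1, ht2, ht3, ht4⟩ := hn
  have hn1R : (1 : ℝ) ≤ (n : ℝ) := by exact_mod_cast hn1
  have hnpos : (0 : ℝ) < (n : ℝ) := lt_of_lt_of_le one_pos hn1R
  have hgam : (gamma S n t : ℝ) ≤ (gamma S' n t : ℝ) + M := by
    exact_mod_cast gamma_le_aux h n t
  refine ⟨t, ht1, ?_, ?_, ?_⟩
  · -- main inequality
    have htpos : (0 : ℝ) ≤ (t : ℝ) := Nat.cast_nonneg t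
    have h1 : (t : ℝ) * (M : ℝ) ≤ (n : ℝ) ^ (1 - ε) * ((ε / 2) * (n : ℝ) ^ ε) := by
      apply mul_le_mul ht4 hM (Nat.cast_nonneg M)
      positivity
    have h2 : (n : ℝ) ^ (1 - ε) * ((ε / 2) * (n : ℝ) ^ ε) = (ε / 2) * (n : ℝ) := by
      rw [mul_comm ((n:ℝ) ^ (1 - ε)), mul_assoc, ← Real.rpow_add hnpos]
      norm_num
    have h3 : (t : ℝ) * (gamma S n t : ℝ) ≤ (t : ℝ) * (gamma S' n t : ℝ) + (t : ℝ) * M := by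
      rw [← mul_add]; exact mul_le_mul_of_nonneg_left hgam htpos
    nlinarith [h1, h2, h3, ht2]
  · calc (n : ℝ) ^ (ε / 2) ≤ (n : ℝ) ^ ε :=
        Real.rpow_le_rpow_of_exponent_le hn1R (by linarith)
      _ ≤ (t : ℝ) := ht3
  · calc (t : ℝ) ≤ (n : ℝ) ^ (1 - ε) := ht4
      _ ≤ (n : ℝ) ^ (1 - ε / 2) :=
        Real.rpow_le_rpow_of_exponent_le hn1R (by linarith)

theorem stmt_7 (S S' : Set ℕ) (hS : S.Infinite) (hS' : S'.Infinite)
    (hfin : (symmDiff S S').Finite) :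
    Loose S ↔ Loose S' := by
  obtain ⟨B, hB⟩ := hfin.bddAbove
  have h : ∀ k, B + 1 ≤ k → (k ∈ S ↔ k ∈ S') := by
    intro k hk
    by_contra hiff
    have hks : k ∈ symmDiff S S' := by
      rw [Set.mem_symmDiff]
      by_cases h1 : k ∈ S
      · exact Or.inl ⟨h1, fun h2 => hiff ⟨fun _ => h2, fun _ => h1⟩⟩
      · by_cases h2 : k ∈ S'
        · exact Or.inr ⟨h2, h1⟩
        · exact absurd ⟨fun hh => absurd hh h1, fun hh => absurd hh h2⟩ hiff
    have := hB hks
    omega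
  exact ⟨loose_of h, loose_of (fun k hk => (h k hk).symm)⟩
end

section
/- Let S, S' ⊆ ℕ be infinite, and f : S → S' a strictly increasing η-bi-Lipschitz bijection with η ≥ 1 and 0 ∈ S ∩ S', f(0) = 0. Then for every n, t ≥ 1 we have γ_{S'}(n, t) ≥ γ_S(⌈n/η⌉, ⌈η t⌉). -/
theorem stmt_8 (S S' : Set ℕ) (hS : S.Infinite) (hS' : S'.Infinite)
    (f : ℕ → ℕ) (hbij : Set.BijOn f S S')
    (hmono : ∀ m ∈ S, ∀ n ∈ S, m < n → f m < f n)
    (η : ℝ) (hη : 1 ≤ η)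
    (hbil : ∀ m ∈ S, ∀ n ∈ S,
      η⁻¹ * |(m : ℝ) - (n : ℝ)| ≤ |(f m : ℝ) - (f n : ℝ)| ∧
      |(f m : ℝ) - (f n : ℝ)| ≤ η * |(m : ℝ) - (n : ℝ)|)
    (h0S : 0 ∈ S) (h0S' : 0 ∈ S') (hf0 : f 0 = 0) :
    ∀ n t : ℕ, 1 ≤ n → 1 ≤ t →
      gamma S ⌈(n : ℝ) / η⌉₊ ⌈η * (t : ℝ)⌉₊ ≤ gamma S' n t := by
  intro n t hn ht
  have hηpos : (0:ℝ) < η := lt_of_lt_of_le one_pos hη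
  set T := ⌈η * (t:ℝ)⌉₊ with hT
  set N := ⌈(n:ℝ)/η⌉₊ with hN
  set A : Set ℕ := {m | m ∈ S ∧ GapGE S m T ∧ m + T < N} with hA
  set B : Set ℕ := {m | m ∈ S' ∧ GapGE S' m t ∧ m + t < n} with hB
  have hsub : f '' A ⊆ B := by
    rintro _ ⟨m, ⟨hmS, hgap, hlt⟩, rfl⟩
    have hfmS' : f m ∈ S' := hbij.mapsTo hmS
    refine ⟨hfmS', ?_, ?_⟩
    · intro j hj1 hj2 hjS'
      obtain ⟨k, hkS, rfl⟩ := hbij.surjOn hjS'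
      have hmk : m < k := by
        rcases lt_trichotomy m k with h | h | h
        · exact h
        · subst h; omega
        · have := hmono k hkS m hmS h; omega
      have hlow := (hbil m hmS k hkS).1
      have habs1 : |(m:ℝ) - (k:ℝ)| = (k:ℝ) - m := by
        rw [abs_sub_comm, abs_of_nonneg]
        have : (m:ℝ) ≤ k := by exact_mod_cast hmk.le
        linarith
      have habs2 : |(f m:ℝ) - (f k:ℝ)| = (f k:ℝ) - f m := by
        rw [abs_sub_comm, abs_of_nonneg]
        have : (f m:ℝ) ≤ f k := by exact_mod_cast (hmono m hmS k hkS hmk).le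
        linarith
      rw [habs1, habs2] at hlow
      have hfk : (f k:ℝ) - f m < t := by
        have : (f k : ℝ) < (f m : ℝ) + t := by exact_mod_cast hj2
        linarith
      have hkm : (k:ℝ) - m < η * t := by
        have h1 : (k:ℝ) - m ≤ η * ((f k:ℝ) - f m) := by
          have := mul_le_mul_of_nonneg_left hlow hηpos.le
          rw [← mul_assoc, mul_inv_cancel₀ hηpos.ne', one_mul] at this
          exact this
        have h2 : η * ((f k:ℝ) - f m) < η * t := by
          exact mul_lt_mul_of_pos_left hfk hηpos
        linarith
      have hkmT : k < m + T := by
        have hle : η * (t:ℝ) ≤ (T:ℝ) := Nat.le_ceil _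
        have : (k:ℝ) < m + T := by linarith
        exact_mod_cast this
      exact hgap k hmk hkmT hkS
    · -- f m + t < n
      have hfm : (f m : ℝ) ≤ η * m := by
        have := (hbil m hmS 0 h0S).2
        rw [hf0] at this
        simpa [abs_of_nonneg] using this
      have hmTN : (m:ℝ) + T + 1 ≤ N := by exact_mod_cast hlt
      have hNlt : (N:ℝ) < (n:ℝ)/η + 1 := Nat.ceil_lt_add_one (by positivity)
      have hmT : η * ((m:ℝ) + T) < n := by
        have : (m:ℝ) + T < (n:ℝ)/η := by linarith
        have := mul_lt_mul_of_pos_left this hηpos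
        rwa [mul_div_cancel₀ _ hηpos.ne'] at this
      have htT : (t:ℝ) ≤ η * T := by
        have h1 : (t:ℝ) ≤ η * t := le_mul_of_one_le_left (by positivity) hη
        have h2 : η * (t:ℝ) ≤ (T:ℝ) := Nat.le_ceil _
        have h3 : (T:ℝ) ≤ η * T := le_mul_of_one_le_left (by positivity) hη
        linarith
      have : (f m : ℝ) + t < n := by nlinarith
      exact_mod_cast this
  have hBfin : B.Finite := (Set.finite_Iio n).subset
    (fun m hm => Set.mem_Iio.mpr (lt_of_le_of_lt (Nat.le_add_right m t) hm.2.2))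
  calc gamma S N T = A.ncard := rfl
    _ = (f '' A).ncard :=
        (Set.ncard_image_of_injOn (hbij.injOn.mono (fun m hm => hm.1))).symm
    _ ≤ B.ncard := Set.ncard_le_ncard hsub hBfin
end

section
/- Let S, S' ⊆ ℕ be infinite sets. Suppose there are S₀ ⊆ S and S₀' ⊆ S' with S ∖ S₀ and S' ∖ S₀' finite, and a strictly increasing bi-Lipschitz bijection f : S₀ → S₀'. Then S is loose if and only if S' is loose. -/
set_option maxHeartbeats 1000000
open Set Filter Real

lemma epsLoose_anti {ε ε' : ℝ} {S : Set ℕ} {n : ℕ} (h2 : ε' ≤ ε)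
    (hn : 1 ≤ n) (h : EpsLoose ε S n) : EpsLoose ε' S n := by
  obtain ⟨t, ht, hγ, hl, hr⟩ := h
  have hn1 : (1:ℝ) ≤ (n:ℝ) := by exact_mod_cast hn
  refine ⟨t, ht, ?_, ?_, ?_⟩
  · have h0 : (0:ℝ) ≤ (n:ℝ) := Nat.cast_nonneg n
    nlinarith
  · exact le_trans (Real.rpow_le_rpow_of_exponent_le hn1 h2) hl
  · exact le_trans hr (Real.rpow_le_rpow_of_exponent_le hn1 (by linarith))

lemma loose_transfer (S S' S₀ S₀' : Set ℕ)
    (hS₀ : S₀ ⊆ S) (hS₀' : S₀' ⊆ S')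
    (hS₀ne : S₀.Nonempty)
    (hfinS : (S \ S₀).Finite) (hfinS' : (S' \ S₀').Finite)
    (f : ℕ → ℕ) (hsurj : Set.SurjOn f S₀ S₀') (hmaps : Set.MapsTo f S₀ S₀')
    (hmono : ∀ m ∈ S₀, ∀ k ∈ S₀, m < k → f m < f k)
    (η : ℝ) (hη : 1 ≤ η)
    (hlow : ∀ m ∈ S₀, ∀ k ∈ S₀, m ≤ k → (k : ℝ) - m ≤ η * ((f k : ℝ) - f m))
    (hupp : ∀ m ∈ S₀, ∀ k ∈ S₀, m ≤ k → (f k : ℝ) - f m ≤ η * ((k : ℝ) - m)) :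
    Loose S → Loose S' := by
  have hη0 : (0:ℝ) < η := lt_of_lt_of_le one_pos hη
  rintro ⟨ε₀, hε₀, hev₀⟩
  set ε : ℝ := min ε₀ (1/2) with hεdef
  have hε : 0 < ε := lt_min hε₀ (by norm_num)
  have hε1 : ε ≤ 1/2 := min_le_right _ _
  have hev : ∀ᶠ n : ℕ in atTop, EpsLoose ε S n := by
    filter_upwards [hev₀, Filter.eventually_ge_atTop 1] with n h hn
    exact epsLoose_anti (min_le_left _ _) hn h
  obtain ⟨M, hM⟩ := Filter.eventually_atTop.1 hev
  obtain ⟨a₀, ha₀⟩ := hS₀ne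
  obtain ⟨N₁, hN₁⟩ : ∃ N, ∀ x ∈ S \ S₀, x ≤ N := hfinS.bddAbove
  obtain ⟨N', hN'⟩ : ∃ N, ∀ x ∈ S' \ S₀', x ≤ N := hfinS'.bddAbove
  set C : ℕ := f a₀ with hCdef
  set N₂ : ℕ := a₀ + ⌈η * ((N':ℝ) + 1)⌉₊ with hN₂def
  set K : ℕ := N₁ + N₂ + a₀ with hKdef
  refine ⟨ε / (16 * η^2), by positivity, ?_⟩
  -- eventual largeness conditions on n'
  have tend1 : Tendsto (fun x : ℕ => ((x:ℝ) / (4*η)) ^ ε) atTop atTop :=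
    (tendsto_rpow_atTop hε).comp
      (Filter.Tendsto.atTop_div_const (by positivity) tendsto_natCast_atTop_atTop)
  have tend2 : Tendsto (fun x : ℕ => ((x:ℝ)) ^ (ε/2)) atTop atTop :=
    (tendsto_rpow_atTop (by positivity)).comp tendsto_natCast_atTop_atTop
  have h1 : ∀ᶠ x : ℕ in atTop, 4*η*((M:ℝ)+1) ≤ (x:ℝ) :=
    tendsto_natCast_atTop_atTop.eventually_ge_atTop _
  have h2 : ∀ᶠ x : ℕ in atTop, 2*((K:ℝ)+1)/ε + 2*η + 1 ≤ ((x:ℝ) / (4*η)) ^ ε :=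
    tend1.eventually_ge_atTop _
  have h3 : ∀ᶠ x : ℕ in atTop, (4*η)^2 ≤ ((x:ℝ)) ^ (ε/2) :=
    tend2.eventually_ge_atTop _
  have h4 : ∀ᶠ x : ℕ in atTop, 4*((C:ℝ) + η) ≤ (x:ℝ) :=
    tendsto_natCast_atTop_atTop.eventually_ge_atTop _
  filter_upwards [h1, h2, h3, h4] with n' H1 H2 H3 H4
  -- basic facts about n'
  have hn'1 : (1:ℝ) ≤ (n':ℝ) := by nlinarith
  set n : ℕ := ⌊((n':ℝ) - C) / η⌋₊ with hndef
  have hfl0 : (0:ℝ) ≤ ((n':ℝ) - C) / η := by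
    apply div_nonneg _ hη0.le; nlinarith
  have nle : (n:ℝ) ≤ ((n':ℝ) - C) / η := Nat.floor_le hfl0
  have nle' : η * (n:ℝ) ≤ (n':ℝ) - C := by
    rw [← le_div_iff₀' hη0]; exact nle
  have nge : (n':ℝ) / (4*η) ≤ (n:ℝ) := by
    have h5 : ((n':ℝ) - C) / η < (n:ℝ) + 1 := Nat.lt_floor_add_one _
    have h6 : (n':ℝ) - C < η * ((n:ℝ) + 1) := by
      rw [div_lt_iff₀ hη0] at h5; linarith [h5]
    rw [div_le_iff₀ (by positivity)]
    nlinarith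
  have hnM : M ≤ n := by
    have h5 : (M:ℝ) + 1 ≤ (n:ℝ) := le_trans (by rw [le_div_iff₀ (by positivity)]; nlinarith) nge
    have h6 : (M:ℝ) ≤ (n:ℝ) := by linarith
    exact_mod_cast h6
  have hn1 : 1 ≤ n := by
    have : (1:ℝ) ≤ (n:ℝ) := le_trans (by rw [le_div_iff₀ (by positivity)]; nlinarith) nge
    exact_mod_cast this
  have hn1' : (1:ℝ) ≤ (n:ℝ) := by exact_mod_cast hn1
  obtain ⟨t, ht1, htγ, htlow, hthigh⟩ := hM n hnM
  -- n^ε is large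
  have hnεge : ((n':ℝ) / (4*η)) ^ ε ≤ (n:ℝ)^ε :=
    Real.rpow_le_rpow (by positivity) nge hε.le
  have hnεbig : 2*((K:ℝ)+1)/ε + 2*η + 1 ≤ (n:ℝ)^ε := le_trans H2 hnεge
  have htbig : 2*η + 1 ≤ (t:ℝ) := by
    have hK0 : (0:ℝ) ≤ 2*((K:ℝ)+1)/ε := by positivity
    linarith [htlow]
  set t' : ℕ := ⌊(t:ℝ)/η⌋₊ with ht'def
  have ht'le : (t':ℝ) ≤ (t:ℝ)/η := Nat.floor_le (by positivity)
  have ht'le' : η * (t':ℝ) ≤ (t:ℝ) := by rw [← le_div_iff₀' hη0]; exact ht'le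
  have ht'ge : (t:ℝ)/(2*η) ≤ (t':ℝ) := by
    have h5 : (t:ℝ)/η < (t':ℝ) + 1 := Nat.lt_floor_add_one _
    rw [div_lt_iff₀ hη0] at h5
    rw [div_le_iff₀ (by positivity)]
    linarith
  have ht'1 : 1 ≤ t' := by
    have : (1:ℝ) ≤ (t':ℝ) := le_trans (by rw [le_div_iff₀ (by positivity)]; linarith) ht'ge
    exact_mod_cast this
  -- the counting sets
  set A : Set ℕ := {m | m ∈ S ∧ GapGE S m t ∧ m + t < n ∧ K < m} with hAdef
  have hAS₀ : A ⊆ S₀ := by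
    intro m hm
    rw [hAdef, Set.mem_setOf_eq] at hm
    obtain ⟨hmS, -, -, hmK⟩ := hm
    by_contra hm
    have : m ≤ N₁ := hN₁ m ⟨hmS, hm⟩
    omega
  -- image of A lands in the B-set
  have himg : ∀ m ∈ A, f m ∈ S' ∧ GapGE S' (f m) t' ∧ f m + t' < n' := by
    rintro m hmA
    rw [hAdef, Set.mem_setOf_eq] at hmA
    obtain ⟨hmS, hgap, hmtn, hmK⟩ := hmA
    have hmS₀ : m ∈ S₀ := hAS₀ (by rw [hAdef, Set.mem_setOf_eq]; exact ⟨hmS, hgap, hmtn, hmK⟩)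
    have hma₀ : a₀ ≤ m := by omega
    have hlow₀ := hlow a₀ ha₀ m hmS₀ hma₀
    have hupp₀ := hupp a₀ ha₀ m hmS₀ hma₀
    -- f m is large
    have hfm_big : (N':ℝ) + 1 ≤ (f m : ℝ) := by
      have hceil : η * ((N':ℝ)+1) ≤ (⌈η * ((N':ℝ) + 1)⌉₊ : ℝ) := Nat.le_ceil _
      have hm2 : (⌈η * ((N':ℝ) + 1)⌉₊ : ℝ) ≤ (m:ℝ) - a₀ := by
        have : a₀ + ⌈η * ((N':ℝ) + 1)⌉₊ ≤ m := by omega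
        have := (Nat.cast_le (α := ℝ)).mpr this
        push_cast at this ⊢
        linarith
      have hfa : (0:ℝ) ≤ (f a₀ : ℝ) := Nat.cast_nonneg _
      nlinarith
    have hfmN' : N' < f m := by
      have : (N':ℝ) < (f m : ℝ) := by linarith
      exact_mod_cast this
    refine ⟨hS₀' (hmaps hmS₀), ?_, ?_⟩
    · -- gap
      intro j hj1 hj2 hjS'
      have hjS₀' : j ∈ S₀' := by
        by_contra hj
        have : j ≤ N' := hN' j ⟨hjS', hj⟩
        omega
      obtain ⟨k, hkS₀, hfk⟩ := hsurj hjS₀'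
      have hmk : m < k := by
        rcases lt_trichotomy m k with h | h | h
        · exact h
        · exfalso; rw [h, hfk] at hj1; exact lt_irrefl _ hj1
        · have := hmono k hkS₀ m hmS₀ h; omega
      have hlowmk := hlow m hmS₀ k hkS₀ hmk.le
      have hkj : (f k : ℝ) = (j : ℝ) := by exact_mod_cast hfk
      have hjlt : (j:ℝ) < (f m : ℝ) + t' := by exact_mod_cast hj2
      have : (k:ℝ) < (m:ℝ) + t := by nlinarith
      have hklt : k < m + t := by exact_mod_cast this
      exact hgap k hmk hklt (hS₀ hkS₀)
    · -- f m + t' < n'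
      have hmtn' : (m:ℝ) + t + 1 ≤ (n:ℝ) := by exact_mod_cast hmtn
      have P : η * ((m:ℝ) + t + 1) ≤ η * n := mul_le_mul_of_nonneg_left hmtn' hη0.le
      have Q : (0:ℝ) ≤ η * (a₀:ℝ) := mul_nonneg hη0.le (Nat.cast_nonneg _)
      have R : (0:ℝ) ≤ (η - 1) * (t:ℝ) := mul_nonneg (by linarith) (Nat.cast_nonneg _)
      have ht't : (t':ℝ) ≤ (t:ℝ) := by nlinarith
      have : (f m : ℝ) + t' < (n' : ℝ) := by nlinarith
      exact_mod_cast this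
  -- counting
  have hBfin : {m | m ∈ S' ∧ GapGE S' m t' ∧ m + t' < n'}.Finite := by
    apply (Set.finite_Iio n').subset
    intro m hm
    have := hm.2.2
    simp only [Set.mem_Iio]
    omega
  have hAfin : A.Finite := by
    apply (Set.finite_Iio n).subset
    intro m hm
    rw [hAdef, Set.mem_setOf_eq] at hm
    simp only [Set.mem_Iio]
    omega
  have hinjA : Set.InjOn f A := by
    intro a ha b hb hab
    rcases lt_trichotomy a b with h | h | h
    · have := hmono a (hAS₀ ha) b (hAS₀ hb) h; omega
    · exact h
    · have := hmono b (hAS₀ hb) a (hAS₀ ha) h; omega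
  have hcard1 : A.ncard ≤ gamma S' n' t' := by
    rw [gamma, ← Set.ncard_image_of_injOn hinjA]
    apply Set.ncard_le_ncard _ hBfin
    rintro x ⟨m, hmA, rfl⟩
    exact himg m hmA
  have hIic : (Set.Iic K).ncard = K + 1 := by
    rw [← Nat.card_coe_set_eq]; simp [Nat.card_Iic]
  have hcard2 : gamma S n t ≤ A.ncard + (K + 1) := by
    rw [gamma, ← hIic]
    refine le_trans (Set.ncard_le_ncard ?_ (hAfin.union (Set.finite_Iic K))) (Set.ncard_union_le _ _)
    intro m hm
    obtain ⟨h1, h2, h3⟩ := hm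
    rcases le_or_gt m K with h | h
    · exact Or.inr h
    · exact Or.inl (by rw [hAdef, Set.mem_setOf_eq]; exact ⟨h1, h2, h3, h⟩)
  -- final verification
  have hγ' : ((A.ncard : ℝ)) ≤ (gamma S' n' t' : ℝ) := by exact_mod_cast hcard1
  have hγ : (gamma S n t : ℝ) ≤ (A.ncard : ℝ) + ((K:ℝ) + 1) := by exact_mod_cast hcard2
  have hnpos : (0:ℝ) < (n:ℝ) := by linarith
  have hn'pos : (0:ℝ) < (n':ℝ) := by linarith
  have hmuln : (n:ℝ)^(1-ε) * (n:ℝ)^ε = (n:ℝ) := by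
    rw [← Real.rpow_add hnpos]; norm_num
  refine ⟨t', ht'1, ?_, ?_, ?_⟩
  · -- ε' n' ≤ t' γ'
    have hKε : 2*((K:ℝ)+1) ≤ (n:ℝ)^ε * ε := (div_le_iff₀ hε).mp (by linarith only [hnεbig, hη0])
    have hpow_nonneg : (0:ℝ) ≤ (n:ℝ)^(1-ε) := Real.rpow_nonneg (by positivity) _
    have hstep1 : 2 * ((t:ℝ) * ((K:ℝ)+1)) ≤ ε * n := by
      have e1 : (t:ℝ) * ((K:ℝ)+1) ≤ (n:ℝ)^(1-ε) * ((K:ℝ)+1) :=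
        mul_le_mul_of_nonneg_right hthigh (by positivity)
      have e2 : (n:ℝ)^(1-ε) * (2*((K:ℝ)+1)) ≤ (n:ℝ)^(1-ε) * ((n:ℝ)^ε * ε) :=
        mul_le_mul_of_nonneg_left hKε hpow_nonneg
      have e3 : (n:ℝ)^(1-ε) * ((n:ℝ)^ε * ε) = ε * n := by
        rw [← mul_assoc, hmuln]; ring
      linarith only [e1, e2, e3]
    have base : ε * (n:ℝ) ≤ 2 * ((t:ℝ) * ((gamma S n t : ℝ) - ((K:ℝ)+1))) := by
      linarith only [htγ, hstep1]
    have hn'4ηn : (n':ℝ) ≤ 4*η*(n:ℝ) := by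
      rw [div_le_iff₀ (by positivity)] at nge; linarith only [nge]
    have hγ'0 : (0:ℝ) ≤ (gamma S' n' t' : ℝ) := Nat.cast_nonneg _
    have ht0 : (0:ℝ) ≤ (t:ℝ) := Nat.cast_nonneg _
    have ht2η : (t:ℝ) ≤ 2*η*(t':ℝ) := by
      rw [div_le_iff₀ (by positivity)] at ht'ge; linarith only [ht'ge]
    have p1 : ε * (n':ℝ) ≤ ε * (4*η*(n:ℝ)) := mul_le_mul_of_nonneg_left hn'4ηn hε.le
    have p2 : 4*η*(ε*(n:ℝ)) ≤ 4*η*(2*((t:ℝ) * ((gamma S n t : ℝ) - ((K:ℝ)+1)))) :=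
      mul_le_mul_of_nonneg_left base (by positivity)
    have p3 : (t:ℝ) * ((gamma S n t : ℝ) - ((K:ℝ)+1)) ≤ (t:ℝ) * (gamma S' n' t' : ℝ) :=
      mul_le_mul_of_nonneg_left (by linarith only [hγ, hγ']) ht0
    have p3' : 8*η*((t:ℝ) * ((gamma S n t : ℝ) - ((K:ℝ)+1))) ≤ 8*η*((t:ℝ) * (gamma S' n' t' : ℝ)) :=
      mul_le_mul_of_nonneg_left p3 (by positivity)
    have p4 : (t:ℝ) * (gamma S' n' t' : ℝ) ≤ (2*η*(t':ℝ)) * (gamma S' n' t' : ℝ) :=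
      mul_le_mul_of_nonneg_right ht2η hγ'0
    have p4' : 8*η*((t:ℝ) * (gamma S' n' t' : ℝ)) ≤ 8*η*((2*η*(t':ℝ)) * (gamma S' n' t' : ℝ)) :=
      mul_le_mul_of_nonneg_left p4 (by positivity)
    rw [div_mul_eq_mul_div, div_le_iff₀ (by positivity)]
    linarith only [p1, p2, p3', p4']
  · -- lower exponent bound
    have hη2 : (1:ℝ) ≤ η^2 := by nlinarith only [hη]
    have hε'le : ε/(16*η^2) ≤ ε/2 :=
      div_le_div_of_nonneg_left hε.le (by norm_num) (by nlinarith only [hη2])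
    have a1 : (n':ℝ)^(ε/(16*η^2)) ≤ (n':ℝ)^(ε/2) :=
      Real.rpow_le_rpow_of_exponent_le hn'1 hε'le
    have hsq : (n':ℝ)^ε = (n':ℝ)^(ε/2) * (n':ℝ)^(ε/2) := by
      rw [← Real.rpow_add hn'pos]; norm_num
    have h4ηε : (4*η)^ε ≤ 4*η := by
      calc (4*η)^ε ≤ (4*η)^(1:ℝ) :=
            Real.rpow_le_rpow_of_exponent_le (by linarith only [hη]) (by linarith only [hε1])
        _ = 4*η := Real.rpow_one _
    have h4ηεpos : (0:ℝ) < (4*η)^ε := Real.rpow_pos_of_pos (by positivity) _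
    have hdiv : ((n':ℝ)/(4*η))^ε = (n':ℝ)^ε/(4*η)^ε :=
      Real.div_rpow (by positivity) (by positivity) _
    have b1 : (n':ℝ)^ε/(4*η)^ε ≤ (n:ℝ)^ε := by rw [← hdiv]; exact hnεge
    have b2 : (n':ℝ)^ε ≤ (n:ℝ)^ε * (4*η)^ε := by
      rw [div_le_iff₀ h4ηεpos] at b1; linarith only [b1]
    have hnε0 : (0:ℝ) ≤ (n:ℝ)^ε := Real.rpow_nonneg (by positivity) _
    have b3 : (n:ℝ)^ε * (4*η)^ε ≤ (n:ℝ)^ε * (4*η) := mul_le_mul_of_nonneg_left h4ηε hnε0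
    have ht2η : (t:ℝ) ≤ 2*η*(t':ℝ) := by
      rw [div_le_iff₀ (by positivity)] at ht'ge; linarith only [ht'ge]
    have q1 : (n:ℝ)^ε*(4*η) ≤ (t:ℝ)*(4*η) := mul_le_mul_of_nonneg_right htlow (by positivity)
    have q2 : (t:ℝ)*(4*η) ≤ 2*η*(t':ℝ)*(4*η) := mul_le_mul_of_nonneg_right ht2η (by positivity)
    have c2 : (n':ℝ)^ε ≤ 8*η^2*(t':ℝ) := by linarith only [b2, b3, q1, q2]
    have hX0 : (0:ℝ) ≤ (n':ℝ)^(ε/2) := Real.rpow_nonneg (by positivity) _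
    have c1 : 16*η^2 * (n':ℝ)^(ε/2) ≤ (n':ℝ)^ε := by
      have := mul_le_mul_of_nonneg_right H3 hX0
      rw [hsq]; linarith only [this]
    have hq : 16*η^2 * (n':ℝ)^(ε/2) ≤ 8*η^2*(t':ℝ) := c1.trans c2
    have h2X : 2*(n':ℝ)^(ε/2) ≤ (t':ℝ) := by
      have h8 : (0:ℝ) < 8*η^2 := by positivity
      rw [← mul_le_mul_iff_right₀ h8]; linarith only [hq]
    linarith only [a1, h2X, hX0]
  · -- upper exponent bound
    have d1 : (n:ℝ) ≤ (n':ℝ) := by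
      have h5 : ((n':ℝ) - C)/η ≤ (n':ℝ) - C := div_le_self (by have h6 : (0:ℝ) ≤ (C:ℝ) := Nat.cast_nonneg _; linarith only [H4, hη0, h6]) hη
      have h6 : (0:ℝ) ≤ (C:ℝ) := Nat.cast_nonneg _
      linarith only [nle, h5, h6]
    have d2 : (n:ℝ)^(1-ε) ≤ (n':ℝ)^(1-ε) :=
      Real.rpow_le_rpow (by positivity) d1 (by linarith only [hε1])
    have hη2 : (1:ℝ) ≤ 16*η^2 := by nlinarith only [hη]
    have hε'ε : ε/(16*η^2) ≤ ε := div_le_self hε.le hη2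
    have d3 : (n':ℝ)^(1-ε) ≤ (n':ℝ)^(1-ε/(16*η^2)) :=
      Real.rpow_le_rpow_of_exponent_le hn'1 (by linarith only [hε'ε])
    have d0 : (t':ℝ) ≤ (t:ℝ) := by
      have := div_le_self (by positivity : (0:ℝ) ≤ (t:ℝ)) hη
      linarith only [ht'le, this]
    linarith only [d0, hthigh, d2, d3]

theorem stmt_9 (S S' : Set ℕ) (hS : S.Infinite) (hS' : S'.Infinite)
    (S₀ S₀' : Set ℕ) (hS₀ : S₀ ⊆ S) (hS₀' : S₀' ⊆ S')
    (hfin : (S \ S₀).Finite) (hfin' : (S' \ S₀').Finite)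
    (f : ℕ → ℕ) (hbij : Set.BijOn f S₀ S₀')
    (hmono : ∀ m ∈ S₀, ∀ n ∈ S₀, m < n → f m < f n)
    (hbil : ∃ η : ℝ, 1 ≤ η ∧ ∀ m ∈ S₀, ∀ n ∈ S₀,
      η⁻¹ * |(m : ℝ) - (n : ℝ)| ≤ |(f m : ℝ) - (f n : ℝ)| ∧
      |(f m : ℝ) - (f n : ℝ)| ≤ η * |(m : ℝ) - (n : ℝ)|) :
    Loose S ↔ Loose S' := by
  obtain ⟨η, hη, hb⟩ := hbil
  have hη0 : (0:ℝ) < η := lt_of_lt_of_le one_pos hη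
  have hfmono_le : ∀ m ∈ S₀, ∀ k ∈ S₀, m ≤ k → f m ≤ f k := by
    intro m hm k hk hmk
    rcases lt_or_eq_of_le hmk with h | h
    · exact (hmono m hm k hk h).le
    · subst h; exact le_rfl
  have habs : ∀ m ∈ S₀, ∀ k ∈ S₀, m ≤ k →
      |(m:ℝ) - k| = (k:ℝ) - m ∧ |(f m : ℝ) - f k| = (f k : ℝ) - f m := by
    intro m hm k hk hmk
    have h1 : (m:ℝ) ≤ k := by exact_mod_cast hmk
    have h2 : (f m : ℝ) ≤ f k := by exact_mod_cast hfmono_le m hm k hk hmk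
    constructor
    · rw [abs_sub_comm, abs_of_nonneg (by linarith)]
    · rw [abs_sub_comm, abs_of_nonneg (by linarith)]
  have hlow : ∀ m ∈ S₀, ∀ k ∈ S₀, m ≤ k → (k : ℝ) - m ≤ η * ((f k : ℝ) - f m) := by
    intro m hm k hk hmk
    have h := (hb m hm k hk).1
    obtain ⟨e1, e2⟩ := habs m hm k hk hmk
    rw [e1, e2] at h
    have := mul_le_mul_of_nonneg_left h hη0.le
    calc (k:ℝ) - m = η * (η⁻¹ * ((k:ℝ) - m)) := by field_simp
      _ ≤ η * ((f k : ℝ) - f m) := this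
  have hupp : ∀ m ∈ S₀, ∀ k ∈ S₀, m ≤ k → (f k : ℝ) - f m ≤ η * ((k : ℝ) - m) := by
    intro m hm k hk hmk
    have h := (hb m hm k hk).2
    obtain ⟨e1, e2⟩ := habs m hm k hk hmk
    rw [e1, e2] at h
    exact h
  have hsub : S \ (S \ S₀) ⊆ S₀ := by
    rintro x ⟨hxS, hx⟩
    by_contra h
    exact hx ⟨hxS, h⟩
  have hS₀ne : S₀.Nonempty := ((hS.diff hfin).mono hsub).nonempty
  have hsub' : S' \ (S' \ S₀') ⊆ S₀' := by
    rintro x ⟨hxS, hx⟩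
    by_contra h
    exact hx ⟨hxS, h⟩
  have hS₀'ne : S₀'.Nonempty := ((hS'.diff hfin').mono hsub').nonempty
  -- inverse function
  set g : ℕ → ℕ := Function.invFunOn f S₀ with hgdef
  have hinv : Set.InvOn g f S₀ S₀' := hbij.invOn_invFunOn
  have hbij' : Set.BijOn g S₀' S₀ := Set.BijOn.symm ⟨hinv.2, hinv.1⟩ hbij
  have hfg : ∀ y ∈ S₀', f (g y) = y := hinv.2
  have hgmaps : Set.MapsTo g S₀' S₀ := hbij'.mapsTo
  have hgsurj : Set.SurjOn g S₀' S₀ := hbij'.surjOn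
  have hgmono_le : ∀ m' ∈ S₀', ∀ k' ∈ S₀', m' ≤ k' → g m' ≤ g k' := by
    intro m' hm' k' hk' h
    by_contra hg
    push_neg at hg
    have := hmono (g k') (hgmaps hk') (g m') (hgmaps hm') hg
    rw [hfg m' hm', hfg k' hk'] at this
    omega
  have hgmono : ∀ m' ∈ S₀', ∀ k' ∈ S₀', m' < k' → g m' < g k' := by
    intro m' hm' k' hk' h
    have h1 := hgmono_le m' hm' k' hk' h.le
    rcases lt_or_eq_of_le h1 with h2 | h2
    · exact h2
    · exfalso
      have : f (g m') = f (g k') := by rw [h2]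
      rw [hfg m' hm', hfg k' hk'] at this
      omega
  have hlow_g : ∀ m' ∈ S₀', ∀ k' ∈ S₀', m' ≤ k' → (k' : ℝ) - m' ≤ η * ((g k' : ℝ) - g m') := by
    intro m' hm' k' hk' h
    have := hupp (g m') (hgmaps hm') (g k') (hgmaps hk') (hgmono_le m' hm' k' hk' h)
    rw [hfg m' hm', hfg k' hk'] at this
    exact this
  have hupp_g : ∀ m' ∈ S₀', ∀ k' ∈ S₀', m' ≤ k' → (g k' : ℝ) - g m' ≤ η * ((k' : ℝ) - m') := by
    intro m' hm' k' hk' h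
    have := hlow (g m') (hgmaps hm') (g k') (hgmaps hk') (hgmono_le m' hm' k' hk' h)
    rw [hfg m' hm', hfg k' hk'] at this
    exact this
  exact ⟨loose_transfer S S' S₀ S₀' hS₀ hS₀' hS₀ne hfin hfin' f hbij.surjOn hbij.mapsTo
      hmono η hη hlow hupp,
    loose_transfer S' S S₀' S₀ hS₀' hS₀ hS₀'ne hfin' hfin g hgsurj hgmaps
      hgmono η hη hlow_g hupp_g⟩
end

section
/- Suppose S ⊆ ℕ is the range of a strictly increasing sequence (a_k) with strictly increasing consecutive differences (a_{k+2} − a_{k+1} > a_{k+1} − a_k > 0 for all k). If a word w ∈ {0,1}^s contains at least two occurrences of the symbol 1, then the set T of occurrences of w in the characteristic sequence χ_S of S has at most one element, i.e., |T| ≤ 1. -/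
theorem stmt_13 (a : ℕ → ℕ)
    (hmono : ∀ k, a k < a (k + 1))
    (hdiff : ∀ k, a (k + 1) - a k < a (k + 2) - a (k + 1))
    (s : ℕ) (w : Fin s → Bool)
    (htwo : ∃ i j : Fin s, i ≠ j ∧ w i = true ∧ w j = true) :
    Set.Subsingleton
      {m : ℕ | ∀ i : Fin s, (m + (i : ℕ) ∈ Set.range a ↔ w i = true)} := by
  have ha : StrictMono a := strictMono_nat_of_lt_succ hmono
  have hg : StrictMono (fun k => a (k + 1) - a k) :=
    strictMono_nat_of_lt_succ hdiff
  obtain ⟨i0, j0, hne, hi0, hj0⟩ := htwo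
  set Q : ℕ → Prop := fun n => ∃ h : n < s, w ⟨n, h⟩ = true with hQdef
  have hQi0 : Q i0.val := ⟨i0.isLt, by simpa using hi0⟩
  have hQj0 : Q j0.val := ⟨j0.isLt, by simpa using hj0⟩
  have hQex : ∃ n, Q n := ⟨i0, hQi0⟩
  set i := Nat.find hQex with hidef
  have hQi : Q i := Nat.find_spec hQex
  have hex2 : ∃ n, Q n ∧ i < n := by
    rcases lt_or_gt_of_ne (fun h => hne (Fin.ext h) : i0.val ≠ j0.val) with h | h
    · exact ⟨j0, hQj0, lt_of_le_of_lt (Nat.find_min' hQex hQi0) h⟩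
    · exact ⟨i0, hQi0, lt_of_le_of_lt (Nat.find_min' hQex hQj0) h⟩
  set j := Nat.find hex2 with hjdef
  obtain ⟨hQj, hij⟩ : Q j ∧ i < j := Nat.find_spec hex2
  have hmin : ∀ t, i < t → t < j → ¬ Q t := fun t h1 h2 hq =>
    Nat.find_min hex2 h2 ⟨hq, h1⟩
  obtain ⟨hi_lt, hwi⟩ := hQi
  obtain ⟨hj_lt, hwj⟩ := hQj
  have key : ∀ m ∈ {m : ℕ | ∀ i : Fin s, (m + (i : ℕ) ∈ Set.range a ↔ w i = true)},
      ∃ p, a p = m + i ∧ a (p + 1) = m + j := by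
    intro m hm
    obtain ⟨p, hp⟩ := (hm ⟨i, hi_lt⟩).2 hwi
    obtain ⟨q, hq⟩ := (hm ⟨j, hj_lt⟩).2 hwj
    have hpq : p < q := ha.lt_iff_lt.mp (by simp only [hp, hq]; omega)
    have h1 : a (p + 1) ≤ m + j := le_trans (ha.le_iff_le.mpr hpq) hq.le
    have h2 : m + i < a (p + 1) := hp ▸ hmono p
    set t := a (p + 1) - m with htdef
    have ht1 : i < t := by simp at hp hq ⊢; omega
    have ht2 : t ≤ j := by simp at hp hq ⊢; omega
    have hts : t < s := lt_of_le_of_lt ht2 hj_lt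
    have hQt : Q t := ⟨hts, (hm ⟨t, hts⟩).1 ⟨p + 1, by simp; omega⟩⟩
    have htj : t = j := by
      by_contra h
      exact hmin t ht1 (lt_of_le_of_ne ht2 h) hQt
    exact ⟨p, hp, by omega⟩
  intro m hm m' hm'
  obtain ⟨p, hp1, hp2⟩ := key m hm
  obtain ⟨p', hp1', hp2'⟩ := key m' hm'
  have hgp : a (p + 1) - a p = a (p' + 1) - a p' := by omega
  have hpp : p = p' := hg.injective hgp
  have : a p = a p' := by rw [hpp]
  omega
end

section
/- Let S ⊆ ℕ be infinite and n, t ∈ ℤ⁺. Then t·(γ_S(n,t) − 1) ≤ 2·f_S(n) or t ≤ ω_S(n). -/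
/-- `f_S(n)`: the least `ℓ` such that for some `ω` with `0 < ω ≤ ℓ`,
`S` is periodic on `{i | ℓ - ω ≤ i ≤ n - (ℓ - ω)}` with period `ω`. -/
noncomputable def fS (S : Set ℕ) (n : ℕ) : ℕ :=
  sInf {ℓ | ∃ ω, 0 < ω ∧ ω ≤ ℓ ∧ PeriodicOn S (Set.Icc (ℓ - ω) (n - (ℓ - ω))) ω}

/-- `ω_S(n)`: the least positive `ω` such that `S` is periodic on
`{i | f_S(n) - ω ≤ i ≤ n - (f_S(n) - ω)}` with period `ω`. -/
noncomputable def omegaS (S : Set ℕ) (n : ℕ) : ℕ :=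
  sInf {ω | 0 < ω ∧ PeriodicOn S (Set.Icc (fS S n - ω) (n - (fS S n - ω))) ω}

lemma spaced_card (t lo hi : ℕ) (ht : 0 < t) (T : Finset ℕ)
    (hsub : ∀ a ∈ T, lo ≤ a ∧ a ≤ hi)
    (hsp : ∀ a ∈ T, ∀ b ∈ T, a < b → a + t ≤ b) :
    t * (T.card - 1) ≤ hi - lo := by
  have key : ∀ a ∈ T, ∀ b ∈ T, a < b → (a - lo) / t + 1 ≤ (b - lo) / t := by
    intro a ha b hb hab
    have h1 : a - lo + t ≤ b - lo := by
      have := hsp a ha b hb hab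
      have := (hsub a ha).1
      omega
    have h2 := Nat.div_le_div_right (c := t) h1
    rw [Nat.add_div_right _ ht] at h2
    omega
  have hinj : Set.InjOn (fun m => (m - lo) / t) T := by
    intro a ha b hb hab
    by_contra hne
    rcases Nat.lt_or_ge a b with h | h
    · have := key a ha b hb h
      simp only at hab
      omega
    · have hlt : b < a := by omega
      have := key b hb a ha hlt
      simp only at hab
      omega
  have hcard : T.card ≤ (hi - lo) / t + 1 := by
    have heq : T.card = (T.image (fun m => (m - lo) / t)).card :=
      (Finset.card_image_of_injOn hinj).symm
    rw [heq]
    have hsub2 : T.image (fun m => (m - lo) / t) ⊆ Finset.range ((hi - lo) / t + 1) := by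
      intro x hx
      simp only [Finset.mem_image] at hx
      obtain ⟨m, hm, rfl⟩ := hx
      have h2 := hsub m hm
      simp only [Finset.mem_range]
      have h3 : m - lo ≤ hi - lo := by omega
      have := Nat.div_le_div_right (c := t) h3
      omega
    calc (T.image (fun m => (m - lo) / t)).card
        ≤ (Finset.range ((hi - lo) / t + 1)).card := Finset.card_le_card hsub2
      _ = (hi - lo) / t + 1 := Finset.card_range _
  calc t * (T.card - 1) ≤ t * ((hi - lo) / t) := by
        exact Nat.mul_le_mul (le_refl t) (Nat.sub_le_iff_le_add.mpr hcard)
    _ ≤ hi - lo := Nat.mul_div_le _ _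

theorem stmt_14 (S : Set ℕ) (hS : S.Infinite) (n t : ℕ) (hn : 1 ≤ n) (ht : 1 ≤ t) :
    t * (gamma S n t - 1) ≤ 2 * fS S n ∨ t ≤ omegaS S n := by
  by_cases hcase : t ≤ omegaS S n
  · exact Or.inr hcase
  left
  push_neg at hcase
  -- the defining set for fS is nonempty
  have hne : {ℓ | ∃ ω, 0 < ω ∧ ω ≤ ℓ ∧
      PeriodicOn S (Set.Icc (ℓ - ω) (n - (ℓ - ω))) ω}.Nonempty := by
    refine ⟨n + 1, n + 1, Nat.succ_pos n, le_refl _, ?_⟩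
    intro x hx hx2
    exfalso
    have h1 := hx2.2
    have h2 : (n + 1) - (n + 1) = 0 := Nat.sub_self _
    rw [h2] at h1
    omega
  set f := fS S n with hfdef
  have hfmem : ∃ ω0, 0 < ω0 ∧ ω0 ≤ f ∧
      PeriodicOn S (Set.Icc (f - ω0) (n - (f - ω0))) ω0 := Nat.sInf_mem hne
  obtain ⟨ω', hω'pos, hω'le, hper'⟩ := hfmem
  -- omegaS set is nonempty and its min satisfies periodicity
  have hωne : {ω | 0 < ω ∧ PeriodicOn S (Set.Icc (f - ω) (n - (f - ω))) ω}.Nonempty :=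
    ⟨ω', hω'pos, hper'⟩
  set w := omegaS S n with hwdef
  have hωmem : 0 < w ∧ PeriodicOn S (Set.Icc (f - w) (n - (f - w))) w :=
    Nat.sInf_mem hωne
  obtain ⟨hwpos, hper⟩ := hωmem
  have hwle : w ≤ f :=
    le_trans (Nat.sInf_le (⟨hω'pos, hper'⟩ :
      ω' ∈ {ω | 0 < ω ∧ PeriodicOn S (Set.Icc (f - ω) (n - (f - ω))) ω})) hω'le
  -- the set counted by gamma
  have hAfin : {m | m ∈ S ∧ GapGE S m t ∧ m + t < n}.Finite := by
    apply Set.Finite.subset (Set.finite_Iio n)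
    intro m hm
    exact lt_of_le_of_lt (Nat.le_add_right m t) hm.2.2
  have hγ : gamma S n t = hAfin.toFinset.card :=
    Set.ncard_eq_toFinset_card _ hAfin
  set T := hAfin.toFinset with hTdef
  have hmemT : ∀ m, m ∈ T ↔ m ∈ S ∧ GapGE S m t ∧ m + t < n := by
    intro m; exact Set.Finite.mem_toFinset hAfin
  -- spacing
  have hsp : ∀ a ∈ T, ∀ b ∈ T, a < b → a + t ≤ b := by
    intro a ha b hb hab
    rw [hmemT] at ha hb
    by_contra hcon
    exact ha.2.1 b hab (by omega) hb.1
  -- dichotomy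
  have hdich : ∀ m ∈ T, m < f - w ∨ n - (f - w) < m + w := by
    intro m hm
    rw [hmemT] at hm
    by_contra hcon
    push_neg at hcon
    obtain ⟨h1, h2⟩ := hcon
    have hmem1 : m ∈ Set.Icc (f - w) (n - (f - w)) := ⟨h1, by omega⟩
    have hmem2 : m + w ∈ Set.Icc (f - w) (n - (f - w)) := ⟨by omega, h2⟩
    have hmw : m + w ∈ S := (hper m hmem1 hmem2).mp hm.1
    exact hm.2.1 (m + w) (by omega) (by omega) hmw
  have hf1 : 1 ≤ f := le_trans hwpos hwle
  set TL := T.filter (fun m => m < f - w) with hTL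
  set TR := T.filter (fun m => ¬ m < f - w) with hTR
  have hsplit : TL.card + TR.card = T.card :=
    Finset.card_filter_add_card_filter_not _
  -- bound on TL
  have hLbound : t * (TL.card - 1) ≤ (f - 1) - 0 := by
    apply spaced_card t 0 (f - 1) ht TL
    · intro a ha
      rw [hTL, Finset.mem_filter] at ha
      constructor
      · omega
      · omega
    · intro a ha b hb hab
      rw [hTL, Finset.mem_filter] at ha hb
      exact hsp a ha.1 b hb.1 hab
  -- bound on TR
  have hRfact : ∀ m ∈ TR, m + f > n ∧ m + t < n := by
    intro m hm
    rw [hTR, Finset.mem_filter] at hm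
    have hd := hdich m hm.1
    have hm2 := hm.1
    rw [hmemT] at hm2
    have h2 : n - (f - w) < m + w := by
      rcases hd with h | h
      · exact absurd h hm.2
      · exact h
    constructor
    · omega
    · exact hm2.2.2
  have hRbound : t * (TR.card - 1) ≤ (n - t - 1) - (n + 1 - f) := by
    apply spaced_card t (n + 1 - f) (n - t - 1) ht TR
    · intro a ha
      have := hRfact a ha
      omega
    · intro a ha b hb hab
      rw [hTR, Finset.mem_filter] at ha hb
      exact hsp a ha.1 b hb.1 hab
  rw [hγ, ← hsplit]
  rcases Nat.eq_zero_or_pos TR.card with h0 | hposR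
  · rw [h0, Nat.add_zero]
    omega
  · -- TR nonempty: get a witness
    obtain ⟨m, hm⟩ := Finset.card_pos.mp hposR
    have hmf := hRfact m hm
    have hB : (n - t - 1) - (n + 1 - f) + t + 2 ≤ f := by omega
    rcases Nat.eq_zero_or_pos TL.card with h0L | hposL
    · rw [h0L, Nat.zero_add]
      omega
    · have e : TL.card + TR.card - 1 = (TL.card - 1) + ((TR.card - 1) + 1) := by omega
      rw [e, Nat.mul_add, Nat.mul_add, Nat.mul_one]
      omega
end

section
/- Let S ⊆ ℕ, w ∈ {0,1}^s, and T = T^{χ_S}_w the set of occurrences of w in the characteristic sequence of S. Then for every n ∈ ℕ, f_T(n) ≤ f_S(n) + s. -/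
theorem stmt_15 (S : Set ℕ) (s : ℕ) (w : Fin s → Bool) :
    ∀ n : ℕ,
      fS {m : ℕ | ∀ i : Fin s, (m + (i : ℕ) ∈ S ↔ w i = true)} n ≤ fS S n + s := by
  intro n
  have hne : {ℓ | ∃ ω, 0 < ω ∧ ω ≤ ℓ ∧
      PeriodicOn S (Set.Icc (ℓ - ω) (n - (ℓ - ω))) ω}.Nonempty := by
    refine ⟨n + 1, n + 1, Nat.succ_pos n, le_rfl, ?_⟩
    intro x hx hx'
    simp only [Nat.sub_self, Set.mem_Icc, Nat.sub_zero] at hx'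
    omega
  have hmem : ∃ ω, 0 < ω ∧ ω ≤ fS S n ∧
      PeriodicOn S (Set.Icc (fS S n - ω) (n - (fS S n - ω))) ω := Nat.sInf_mem hne
  obtain ⟨ω, hω0, hωℓ, hper⟩ := hmem
  apply Nat.sInf_le
  refine ⟨ω, hω0, by omega, ?_⟩
  intro x hx hx'
  simp only [Set.mem_Icc] at hx hx'
  have hkey : ∀ i : Fin s, (x + (i : ℕ) ∈ S ↔ x + (i : ℕ) + ω ∈ S) := by
    intro i
    have hi := i.isLt
    refine hper (x + (i : ℕ)) ?_ ?_ <;> simp only [Set.mem_Icc] <;> omega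
  simp only [Set.mem_setOf_eq]
  constructor
  · intro hT i
    have h1 := hkey i
    have h2 := hT i
    rw [show x + ω + (i : ℕ) = x + (i : ℕ) + ω by ring]
    tauto
  · intro hT i
    have h1 := hkey i
    have h2 := hT i
    rw [show x + ω + (i : ℕ) = x + (i : ℕ) + ω by ring] at h2
    tauto
end

section
/- Let a, b, c ∈ ℕ with a, b ∈ S, a < b < c, c ∈ S, where a, b, c are the three least elements of Δ ∩ S for an interval Δ of length |Δ| ≥ 2ω on which S is periodic with period ω > 0, and suppose the consecutive differences of elements of S strictly increase. Then a contradiction ensues; equivalently, no interval of length at least 2ω on which such an S is ω-periodic can contain three elements of S. -/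
theorem stmt_16 (u : ℕ → ℕ)
    (hmono : ∀ k, u k < u (k + 1))
    (hdiff : ∀ k, u (k + 1) - u k < u (k + 2) - u (k + 1))
    (a b ω : ℕ) (hω : 0 < ω)
    (hper : PeriodicOn (Set.range u) (Set.Icc a b) ω)
    (hlen : 2 * ω ≤ b + 1 - a) :
    ¬ ∃ x y z : ℕ, x ∈ Set.Icc a b ∩ Set.range u ∧ y ∈ Set.Icc a b ∩ Set.range u ∧
      z ∈ Set.Icc a b ∩ Set.range u ∧ x < y ∧ y < z := by
  rintro ⟨x, y, z, ⟨⟨hxa, hxb⟩, px, hpx⟩, ⟨⟨hya, hyb⟩, py, hpy⟩,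
    ⟨⟨hza, hzb⟩, pz, hpz⟩, hxy, hyz⟩
  have hu : StrictMono u := strictMono_nat_of_lt_succ hmono
  have hd : StrictMono (fun k => u (k + 1) - u k) := strictMono_nat_of_lt_succ hdiff
  have hab : a + 2 * ω ≤ b + 1 := by omega
  -- least index whose value lies in [a,b]
  have hex : ∃ k, a ≤ u k ∧ u k ≤ b := ⟨px, by rw [hpx]; exact ⟨hxa, hxb⟩⟩
  set i := Nat.find hex with hi_def
  have hi : a ≤ u i ∧ u i ≤ b := Nat.find_spec hex
  have hmin : ∀ m, a ≤ u m → u m ≤ b → i ≤ m := fun m h1 h2 => Nat.find_min' hex ⟨h1, h2⟩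
  -- u i < a + ω
  have hiub : u i < a + ω := by
    by_contra h
    push_neg at h
    have h1 : u i - ω ∈ Set.Icc a b := ⟨by omega, by omega⟩
    have heq : u i - ω + ω = u i := by omega
    have h2 : u i - ω ∈ Set.range u := by
      refine (hper _ h1 ?_).2 ?_
      · rw [heq]; exact ⟨hi.1, hi.2⟩
      · rw [heq]; exact ⟨i, rfl⟩
    obtain ⟨m, hm⟩ := h2
    have hmi : m < i := hu.lt_iff_lt.1 (by omega)
    have : i ≤ m := hmin m (by omega) (by omega)
    omega
  -- u i + ω is in S
  have hI0 : u i ∈ Set.Icc a b := ⟨hi.1, hi.2⟩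
  have hI1 : u i + ω ∈ Set.Icc a b := ⟨by omega, by omega⟩
  obtain ⟨j, hj⟩ : u i + ω ∈ Set.range u := (hper _ hI0 hI1).1 ⟨i, rfl⟩
  have hij : i < j := hu.lt_iff_lt.1 (by omega)
  -- indices of x, y, z are at least i, i+1, i+2
  have hpxi : i ≤ px := hmin px (by omega) (by omega)
  have hxge : u i ≤ x := by rw [← hpx]; exact hu.le_iff_le.2 hpxi
  have hpyi : i < py := hu.lt_iff_lt.1 (by omega)
  have hyge : u (i + 1) ≤ y := by rw [← hpy]; exact hu.le_iff_le.2 (by omega)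
  have hpzi : py < pz := hu.lt_iff_lt.1 (by omega)
  have hzge : u (i + 2) ≤ z := by rw [← hpz]; exact hu.le_iff_le.2 (by omega)
  have hI2 : u (i + 1) ∈ Set.Icc a b := ⟨by have := hmono i; omega, by omega⟩
  by_cases hcase : u (i + 1) + ω ≤ b
  · -- u (i+1) + ω ∈ S lies strictly between u j and u (j+1)
    have hI3 : u (i + 1) + ω ∈ Set.Icc a b := ⟨by have := hmono i; omega, hcase⟩
    obtain ⟨m, hm⟩ : u (i + 1) + ω ∈ Set.range u := (hper _ hI2 hI3).1 ⟨i + 1, rfl⟩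
    have hdij : u (i + 1) - u i < u (j + 1) - u j := hd hij
    have h1 := hmono i
    have h2 := hmono j
    have hjm : j < m := hu.lt_iff_lt.1 (by omega)
    have hmj : m < j + 1 := hu.lt_iff_lt.1 (by omega)
    omega
  · -- downward: u (i+1) - ω ∈ S forces u (i+1) = u i + ω
    push_neg at hcase
    have hge : a + ω ≤ u (i + 1) := by omega
    have hI3 : u (i + 1) - ω ∈ Set.Icc a b := ⟨by omega, by omega⟩
    have heq : u (i + 1) - ω + ω = u (i + 1) := by omega
    obtain ⟨m, hm⟩ : u (i + 1) - ω ∈ Set.range u := by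
      refine (hper _ hI3 ?_).2 ?_
      · rw [heq]; exact hI2
      · rw [heq]; exact ⟨i + 1, rfl⟩
    have hmlt : m < i + 1 := hu.lt_iff_lt.1 (by omega)
    have hmge : i ≤ m := hmin m (by omega) (by omega)
    have hmi : m = i := by omega
    have hstep : u (i + 1) = u i + ω := by rw [hmi] at hm; omega
    -- now u (i+2) - ω ∈ S lies strictly between u (i+1) and u (i+2)
    have hd2 : u (i + 1) - u i < u (i + 2) - u (i + 1) := hdiff i
    have h1 := hmono i
    have h2 := hmono (i + 1)
    have hI4 : u (i + 2) ∈ Set.Icc a b := ⟨by omega, by omega⟩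
    have hI5 : u (i + 2) - ω ∈ Set.Icc a b := ⟨by omega, by omega⟩
    have heq2 : u (i + 2) - ω + ω = u (i + 2) := by omega
    obtain ⟨m', hm'⟩ : u (i + 2) - ω ∈ Set.range u := by
      refine (hper _ hI5 ?_).2 ?_
      · rw [heq2]; exact hI4
      · rw [heq2]; exact ⟨i + 2, rfl⟩
    have h3 : i + 1 < m' := hu.lt_iff_lt.1 (by omega)
    have h4 : m' < i + 2 := hu.lt_iff_lt.1 (by omega)
    omega
end
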